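/- arXiv:1801.02910 — 5 statements merged into one kernel-verified Lean document; each statement's English description precedes it below -/
import Mathlib

section
/- If P lies on the boundary of the Newton polyhedron Δ₀(f) ⊆ ℝⁿ of a nonzero polynomial f vanishing at the origin, Q lies on the boundary of Δ₀(g) ⊆ ℝᵐ for g likewise, then every convex combination of (P,0) and (0,Q) lies on the boundary of Δ₀(f+g) ⊆ ℝ^{n+m}, where f and g are in disjoint sets of variables. -/
open MvPolynomial Pointwise

noncomputable def suppSet {ι k : Type*} [CommSemiring k] (f : MvPolynomial ι k) :
    Set (ι → ℝ) :=
  (fun d : ι →₀ ℕ => fun i => (d i : ℝ)) '' (f.support : Set (ι →₀ ℕ))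

noncomputable def newton {ι k : Type*} [CommSemiring k] (f : MvPolynomial ι k) :
    Set (ι → ℝ) :=
  convexHull ℝ (suppSet f) + {x : ι → ℝ | ∀ i, 0 ≤ x i}

noncomputable def sigmaP {ι k : Type*} [CommSemiring k] (f : MvPolynomial ι k) : ENNReal :=
  sSup {s : ENNReal | ∃ σ : ℝ, 0 < σ ∧ s = ENNReal.ofReal σ ∧ (fun _ : ι => 1 / σ) ∈ newton f}

noncomputable def NV {ι k : Type*} [Fintype ι] [CommSemiring k]
    (f : MvPolynomial ι k) (a : ι → ℝ) : ℝ :=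
  sInf ((fun x => ∑ i, a i * x i) '' newton f)

noncomputable def meetLocus {ι k : Type*} [Fintype ι] [CommSemiring k]
    (f : MvPolynomial ι k) (a : ι → ℝ) : Set (ι → ℝ) :=
  {x ∈ newton f | ∑ i, a i * x i = NV f a}

open Classical in
noncomputable def trunc {ι k : Type*} [CommSemiring k]
    (f : MvPolynomial ι k) (τ : Set (ι → ℝ)) : MvPolynomial ι k :=
  ∑ d ∈ f.support, if (fun i => (d i : ℝ)) ∈ τ then monomial d (f.coeff d) else 0

def nondegWrt {ι k : Type*} [Fintype ι] [Field k]
    (f : MvPolynomial ι k) (τ : Set (ι → ℝ)) : Prop :=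
  ¬ ∃ x : ι → AlgebraicClosure k, (∀ i, x i ≠ 0) ∧
      ∀ i, eval x (pderiv i (map (algebraMap k (AlgebraicClosure k)) (trunc f τ))) = 0

def weakNondegWrt {ι k : Type*} [Fintype ι] [Field k]
    (f : MvPolynomial ι k) (τ : Set (ι → ℝ)) : Prop :=
  ¬ ∃ x : ι → AlgebraicClosure k, (∀ i, x i ≠ 0) ∧
      eval x (map (algebraMap k (AlgebraicClosure k)) (trunc f τ)) = 0 ∧
      ∀ i, eval x (pderiv i (map (algebraMap k (AlgebraicClosure k)) (trunc f τ))) = 0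

def isNondeg {ι k : Type*} [Fintype ι] [Field k] (f : MvPolynomial ι k) : Prop :=
  ∀ a : ι → ℝ, (∀ i, 0 ≤ a i) → nondegWrt f (meetLocus f a)

set_option linter.unusedSectionVars false

section gen
variable {ι k : Type*} [Fintype ι] [CommSemiring k]

lemma orthant_convex : Convex ℝ {x : ι → ℝ | ∀ i, 0 ≤ x i} := by
  intro x hx y hy s r hs hr _
  intro i
  have := hx i; have := hy i
  simp only [Pi.add_apply, Pi.smul_apply, smul_eq_mul]
  positivity

lemma orthant_closed : IsClosed {x : ι → ℝ | ∀ i, 0 ≤ x i} := by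
  have : {x : ι → ℝ | ∀ i, 0 ≤ x i} = Set.pi Set.univ (fun _ => Set.Ici 0) := by
    ext x; simp only [Set.mem_pi, Set.mem_univ, forall_true_left, Set.mem_Ici, Set.mem_setOf_eq]
  rw [this]
  exact isClosed_set_pi fun i _ => isClosed_Ici

lemma newton_convex (f : MvPolynomial ι k) : Convex ℝ (newton f) :=
  (convex_convexHull ℝ _).add orthant_convex

lemma newton_isClosed (f : MvPolynomial ι k) : IsClosed (newton f) :=
  IsClosed.add_left_of_isCompact orthant_closed
    ((f.support.finite_toSet.image _).isCompact_convexHull ℝ)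

lemma suppSet_nonneg {f : MvPolynomial ι k} {x : ι → ℝ} (hx : x ∈ suppSet f) (i : ι) :
    0 ≤ x i := by
  obtain ⟨d, _, rfl⟩ := hx
  positivity

lemma newton_nonneg {f : MvPolynomial ι k} {x : ι → ℝ} (hx : x ∈ newton f) (i : ι) :
    0 ≤ x i := by
  obtain ⟨u, hu, w, hw, rfl⟩ := hx
  have hu' : ∀ j, 0 ≤ u j := by
    have : u ∈ {x : ι → ℝ | ∀ i, 0 ≤ x i} :=
      convexHull_min (fun z hz i => suppSet_nonneg hz i) orthant_convex hu
    exact this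
  exact add_nonneg (hu' i) (hw i)

lemma newton_add_mem {f : MvPolynomial ι k} {x w : ι → ℝ} (hx : x ∈ newton f)
    (hw : ∀ i, 0 ≤ w i) : x + w ∈ newton f := by
  obtain ⟨u, hu, c, hc, rfl⟩ := hx
  exact ⟨u, hu, c + w, fun i => add_nonneg (hc i) (hw i), by funext i; simp only [Pi.add_apply]; ring⟩

lemma newton_nonempty {f : MvPolynomial ι k} (hf : f ≠ 0) : (newton f).Nonempty := by
  obtain ⟨d, hd⟩ := (MvPolynomial.support_nonempty.2 hf)
  exact ⟨(fun i => (d i : ℝ)), (fun i => (d i : ℝ)), subset_convexHull ℝ _ ⟨d, hd, rfl⟩,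
    0, fun i => le_refl 0, by simp⟩

lemma newton_interior_nonempty {f : MvPolynomial ι k} (hf : f ≠ 0) :
    (interior (newton f)).Nonempty := by
  obtain ⟨x0, hx0⟩ := newton_nonempty hf
  have hopen : IsOpen {y : ι → ℝ | ∀ i, x0 i < y i} := by
    have : {y : ι → ℝ | ∀ i, x0 i < y i} = Set.pi Set.univ (fun i => Set.Ioi (x0 i)) := by
      ext y; simp [Set.mem_pi]
    rw [this]
    exact isOpen_set_pi Set.finite_univ fun i _ => isOpen_Ioi
  have hsub : {y : ι → ℝ | ∀ i, x0 i < y i} ⊆ newton f := by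
    intro y hy
    have : y = x0 + (y - x0) := by abel
    rw [this]
    exact newton_add_mem hx0 fun i => by have := hy i; simp; linarith
  refine ⟨x0 + 1, ?_⟩
  have hmem : (x0 + 1) ∈ {y : ι → ℝ | ∀ i, x0 i < y i} := fun i => by simp
  exact interior_maximal hsub hopen hmem
end gen

section supp
variable {ι k : Type*} [Fintype ι] [CommSemiring k]

lemma exists_support_vector {f : MvPolynomial ι k} (hf : f ≠ 0) {P : ι → ℝ}
    (hP : P ∈ frontier (newton f)) :
    ∃ a : ι → ℝ, (∀ i, 0 ≤ a i) ∧ a ≠ 0 ∧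
      ∀ x ∈ newton f, ∑ i, a i * P i ≤ ∑ i, a i * x i := by
  classical
  have hclosed := newton_isClosed f
  rw [hclosed.frontier_eq] at hP
  obtain ⟨hPmem, hPnotint⟩ := hP
  obtain ⟨φ, hφ⟩ := geometric_hahn_banach_open_point
    ((newton_convex f).interior) isOpen_interior hPnotint
  obtain ⟨y0, hy0⟩ := newton_interior_nonempty hf
  have hle : ∀ x ∈ newton f, φ x ≤ φ P := by
    intro x hx
    have key : ∀ b : ℝ, 0 < b → b ≤ 1 → φ ((1-b) • x + b • y0) < φ P := fun b hb hb1 =>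
      hφ _ ((newton_convex f).combo_self_interior_mem_interior hx hy0 (by linarith) hb
        (by ring))
    have hcont : Continuous fun b : ℝ => φ ((1-b) • x + b • y0) := by fun_prop
    have ht : Filter.Tendsto (fun b : ℝ => φ ((1-b) • x + b • y0))
        (nhdsWithin 0 (Set.Ioi 0)) (nhds (φ x)) := by
      have h0 := (hcont.tendsto 0).mono_left
        (nhdsWithin_le_nhds (s := Set.Ioi (0:ℝ)))
      simpa using h0
    refine le_of_tendsto ht ?_
    filter_upwards [Ioc_mem_nhdsGT_of_mem (by constructor <;> norm_num :
      (0:ℝ) ∈ Set.Ico (0:ℝ) 1)] with b hb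
    exact (key b hb.1 hb.2).le
  set e : ι → ι → ℝ := fun i => fun j => if i = j then (1:ℝ) else 0 with he
  set a : ι → ℝ := fun i => -φ (e i) with ha
  have hφeval : ∀ x : ι → ℝ, φ x = -∑ i, a i * x i := by
    intro x
    conv_lhs => rw [pi_eq_sum_univ x, map_sum]
    rw [← Finset.sum_neg_distrib]
    congr 1; ext i
    rw [map_smul]
    simp [ha, smul_eq_mul]; ring
  have hψ : ∀ x ∈ newton f, ∑ i, a i * P i ≤ ∑ i, a i * x i := by
    intro x hx
    have := hle x hx
    rw [hφeval x, hφeval P] at this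
    linarith
  have hae : ∀ i, ∑ j, a j * (e i) j = a i := by
    intro i
    simp [he, mul_ite, Finset.sum_ite_eq]
  refine ⟨a, ?_, ?_, hψ⟩
  · intro i
    have hmem : P + e i ∈ newton f := newton_add_mem hPmem (fun j => by
      simp only [he]; split <;> norm_num)
    have := hψ _ hmem
    have hsplit : ∑ j, a j * (P + e i) j = (∑ j, a j * P j) + a i := by
      rw [← hae i, ← Finset.sum_add_distrib]
      congr 1; ext j; simp [mul_add]
    rw [hsplit] at this
    linarith
  · intro h0
    have : φ y0 < φ P := hφ y0 hy0
    rw [hφeval y0, hφeval P] at this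
    simp [h0] at this
end supp

section appendlem
variable {n m : ℕ}

lemma append_add (a a' : Fin n → ℝ) (b b' : Fin m → ℝ) :
    Fin.append (a + a') (b + b') = Fin.append a b + Fin.append a' b' := by
  funext i
  refine Fin.addCases (fun j => ?_) (fun j => ?_) i <;>
    simp [Fin.append_left, Fin.append_right]

lemma append_smul (t : ℝ) (a : Fin n → ℝ) (b : Fin m → ℝ) :
    Fin.append (t • a) (t • b) = t • Fin.append a b := by
  funext i
  refine Fin.addCases (fun j => ?_) (fun j => ?_) i <;>
    simp [Fin.append_left, Fin.append_right]

lemma appendL_linear : IsLinearMap ℝ (fun x : Fin n → ℝ => Fin.append x (0 : Fin m → ℝ)) := by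
  constructor
  · intro x y
    rw [← append_add]; simp
  · intro c x
    rw [← append_smul]; simp

lemma appendR_linear : IsLinearMap ℝ (fun y : Fin m → ℝ => Fin.append (0 : Fin n → ℝ) y) := by
  constructor
  · intro x y
    rw [← append_add]; simp
  · intro c x
    rw [← append_smul]; simp

lemma dot_append (a : Fin n → ℝ) (b : Fin m → ℝ) (x : Fin n → ℝ) (y : Fin m → ℝ) :
    ∑ i, Fin.append a b i * Fin.append x y i = (∑ i, a i * x i) + (∑ i, b i * y i) := by
  rw [Fin.sum_univ_add]
  simp [Fin.append_left, Fin.append_right]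
end appendlem

section renames
variable {k : Type*} [CommSemiring k] {n m : ℕ}

lemma natAdd_inj : Function.Injective (Fin.natAdd n (m := m)) := by
  intro a b h
  have := congrArg Fin.val h
  simp only [Fin.natAdd] at this
  exact Fin.ext (by omega)

lemma mapDomain_castAdd_real (d : Fin n →₀ ℕ) :
    (fun i => ((Finsupp.mapDomain (Fin.castAdd m) d) i : ℝ)) =
      Fin.append (fun i => (d i : ℝ)) (0 : Fin m → ℝ) := by
  funext i
  refine Fin.addCases (fun j => ?_) (fun j => ?_) i
  · rw [Fin.append_left, Finsupp.mapDomain_apply (Fin.castAdd_injective _ _)]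
  · rw [Fin.append_right, Finsupp.mapDomain_notin_range]
    · simp
    · rintro ⟨j', hj'⟩
      have := congrArg Fin.val hj'
      simp [Fin.castAdd, Fin.castLE, Fin.natAdd] at this
      omega

lemma mapDomain_natAdd_real (d : Fin m →₀ ℕ) :
    (fun i => ((Finsupp.mapDomain (Fin.natAdd n) d) i : ℝ)) =
      Fin.append (0 : Fin n → ℝ) (fun i => (d i : ℝ)) := by
  funext i
  refine Fin.addCases (fun j => ?_) (fun j => ?_) i
  · rw [Fin.append_left, Finsupp.mapDomain_notin_range]
    · simp
    · rintro ⟨j', hj'⟩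
      have := congrArg Fin.val hj'
      simp [Fin.castAdd, Fin.castLE, Fin.natAdd] at this
      omega
  · rw [Fin.append_right, Finsupp.mapDomain_apply natAdd_inj]

lemma suppSet_rename_castAdd (f : MvPolynomial (Fin n) k) :
    suppSet (rename (Fin.castAdd m) f) =
      (fun x : Fin n → ℝ => Fin.append x (0 : Fin m → ℝ)) '' suppSet f := by
  classical
  unfold suppSet
  rw [support_rename_of_injective (Fin.castAdd_injective _ _), Finset.coe_image,
    Set.image_image, Set.image_image]
  apply Set.image_congr
  intro d _
  exact mapDomain_castAdd_real d

lemma suppSet_rename_natAdd (g : MvPolynomial (Fin m) k) :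
    suppSet (rename (Fin.natAdd n) g) =
      (fun y : Fin m → ℝ => Fin.append (0 : Fin n → ℝ) y) '' suppSet g := by
  classical
  unfold suppSet
  rw [support_rename_of_injective natAdd_inj, Finset.coe_image,
    Set.image_image, Set.image_image]
  apply Set.image_congr
  intro d _
  exact mapDomain_natAdd_real d
end renames

section supplem
variable {ι k : Type*} [Fintype ι] [CommSemiring k]

lemma dot_linear (a : ι → ℝ) : IsLinearMap ℝ (fun x : ι → ℝ => ∑ i, a i * x i) := by
  constructor
  · intro x y; simp [mul_add, Finset.sum_add_distrib]
  · intro c x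
    simp only [Pi.smul_apply, smul_eq_mul, Finset.mul_sum]
    apply Finset.sum_congr rfl
    intros; ring

lemma suppSet_subset_newton (f : MvPolynomial ι k) : suppSet f ⊆ newton f := by
  intro x hx
  exact ⟨x, subset_convexHull ℝ _ hx, 0, fun i => le_refl 0, by simp⟩
end supplem

section union
variable {k : Type*} [CommSemiring k] {n m : ℕ}

lemma mem_suppF_natAdd {f : MvPolynomial (Fin n) k} {d : Fin (n+m) →₀ ℕ}
    (hd : d ∈ (rename (Fin.castAdd m) f).support) (j : Fin m) : d (Fin.natAdd n j) = 0 := by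
  classical
  rw [support_rename_of_injective (Fin.castAdd_injective _ _)] at hd
  obtain ⟨e, _, rfl⟩ := Finset.mem_image.1 hd
  refine Finsupp.mapDomain_notin_range _ _ ?_
  rintro ⟨j', hj'⟩
  have := congrArg Fin.val hj'
  simp [Fin.castAdd, Fin.castLE, Fin.natAdd] at this
  omega

lemma mem_suppG_castAdd {g : MvPolynomial (Fin m) k} {d : Fin (n+m) →₀ ℕ}
    (hd : d ∈ (rename (Fin.natAdd n) g).support) (j : Fin n) : d (Fin.castAdd m j) = 0 := by
  classical
  rw [support_rename_of_injective natAdd_inj] at hd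
  obtain ⟨e, _, rfl⟩ := Finset.mem_image.1 hd
  refine Finsupp.mapDomain_notin_range _ _ ?_
  rintro ⟨j', hj'⟩
  have := congrArg Fin.val hj'
  simp [Fin.castAdd, Fin.castLE, Fin.natAdd] at this
  omega

lemma support_sum_eq {f : MvPolynomial (Fin n) k} {g : MvPolynomial (Fin m) k}
    (hf : constantCoeff f = 0) :
    (rename (Fin.castAdd m) f + rename (Fin.natAdd n) g).support =
      (rename (Fin.castAdd m) f).support ∪ (rename (Fin.natAdd n) g).support := by
  classical
  have hdisj : ∀ d : Fin (n+m) →₀ ℕ, d ∈ (rename (Fin.castAdd m) f).support →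
      d ∉ (rename (Fin.natAdd n) g).support := by
    intro d hdF hdG
    have h0 : d = 0 := by
      ext i
      refine Fin.addCases (fun j => ?_) (fun j => ?_) i
      · simpa using mem_suppG_castAdd hdG j
      · simpa using mem_suppF_natAdd hdF j
    rw [h0] at hdF
    have : constantCoeff (rename (Fin.castAdd m) f) ≠ 0 := by
      rw [constantCoeff_eq]
      exact MvPolynomial.mem_support_iff.1 hdF
    rw [constantCoeff_rename, hf] at this
    exact this rfl
  ext d
  simp only [MvPolynomial.mem_support_iff, Finset.mem_union, coeff_add]
  by_cases hF : MvPolynomial.coeff d (rename (Fin.castAdd m) f) = 0 <;>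
    by_cases hG : MvPolynomial.coeff d (rename (Fin.natAdd n) g) = 0
  · simp [hF, hG]
  · simp [hF, hG]
  · simp [hF, hG]
  · exact absurd (MvPolynomial.mem_support_iff.2 hG)
      (hdisj d (MvPolynomial.mem_support_iff.2 hF))

lemma suppSet_sum_eq {f : MvPolynomial (Fin n) k} {g : MvPolynomial (Fin m) k}
    (hf : constantCoeff f = 0) :
    suppSet (rename (Fin.castAdd m) f + rename (Fin.natAdd n) g) =
      suppSet (rename (Fin.castAdd m) f) ∪ suppSet (rename (Fin.natAdd n) g) := by
  unfold suppSet
  rw [support_sum_eq hf, Finset.coe_union, Set.image_union]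
end union

theorem stmt0 {k : Type*} [CommRing k] {n m : ℕ}
    (f : MvPolynomial (Fin n) k) (g : MvPolynomial (Fin m) k)
    (hf0 : f ≠ 0) (hg0 : g ≠ 0)
    (hf : constantCoeff f = 0) (hg : constantCoeff g = 0)
    (P : Fin n → ℝ) (Q : Fin m → ℝ)
    (hP : P ∈ frontier (newton f)) (hQ : Q ∈ frontier (newton g))
    (t : ℝ) (ht0 : 0 ≤ t) (ht1 : t ≤ 1) :
    Fin.append (t • P) ((1 - t) • Q) ∈
      frontier (newton (rename (Fin.castAdd m) f + rename (Fin.natAdd n) g)) := by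
  classical
  set F := rename (Fin.castAdd m) f with hF
  set G := rename (Fin.natAdd n) g with hG
  set z : Fin (n+m) → ℝ := Fin.append (t • P) ((1 - t) • Q) with hz
  have hPmem : P ∈ newton f := by
    rw [(newton_isClosed f).frontier_eq] at hP; exact hP.1
  have hQmem : Q ∈ newton g := by
    rw [(newton_isClosed g).frontier_eq] at hQ; exact hQ.1
  -- membership
  have hzmem : z ∈ newton (F + G) := by
    obtain ⟨u, hu, c, hc, hPuc⟩ := hPmem
    obtain ⟨v, hv, c', hc', hQvc⟩ := hQmem
    have huF : Fin.append u (0 : Fin m → ℝ) ∈ convexHull ℝ (suppSet F) := by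
      rw [hF, suppSet_rename_castAdd, ← IsLinearMap.image_convexHull appendL_linear]
      exact ⟨u, hu, rfl⟩
    have hvG : Fin.append (0 : Fin n → ℝ) v ∈ convexHull ℝ (suppSet G) := by
      rw [hG, suppSet_rename_natAdd, ← IsLinearMap.image_convexHull appendR_linear]
      exact ⟨v, hv, rfl⟩
    have hcomb : t • Fin.append u (0 : Fin m → ℝ) + (1 - t) • Fin.append (0 : Fin n → ℝ) v
        ∈ convexHull ℝ (suppSet (F + G)) := by
      rw [suppSet_sum_eq hf]
      have h1 : Fin.append u (0 : Fin m → ℝ) ∈ convexHull ℝ (suppSet F ∪ suppSet G) :=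
        convexHull_mono Set.subset_union_left huF
      have h2 : Fin.append (0 : Fin n → ℝ) v ∈ convexHull ℝ (suppSet F ∪ suppSet G) :=
        convexHull_mono Set.subset_union_right hvG
      exact (convex_convexHull ℝ _) h1 h2 ht0 (by linarith) (by ring)
    refine ⟨_, hcomb, Fin.append (t • c) ((1 - t) • c'), ?_, ?_⟩
    · intro i
      refine Fin.addCases (fun j => ?_) (fun j => ?_) i
      · rw [Fin.append_left]
        have := hc j
        simp only [Pi.smul_apply, smul_eq_mul]
        positivity
      · rw [Fin.append_right]
        have := hc' j
        have h1t : 0 ≤ 1 - t := by linarith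
        simp only [Pi.smul_apply, smul_eq_mul]
        positivity
    · show (t • Fin.append u (0 : Fin m → ℝ) + (1 - t) • Fin.append (0 : Fin n → ℝ) v)
          + Fin.append (t • c) ((1 - t) • c') = z
      rw [hz, ← hPuc, ← hQvc]
      funext i
      refine Fin.addCases (fun j => ?_) (fun j => ?_) i <;>
        simp [Fin.append_left, Fin.append_right, mul_add]
  -- not interior
  obtain ⟨a, ha0, hane, haP⟩ := exists_support_vector hf0 hP
  obtain ⟨b, hb0, hbne, hbQ⟩ := exists_support_vector hg0 hQ
  set α : ℝ := ∑ i, a i * P i with hα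
  set β : ℝ := ∑ i, b i * Q i with hβ
  have hα0 : 0 ≤ α := Finset.sum_nonneg fun i _ =>
    mul_nonneg (ha0 i) (newton_nonneg hPmem i)
  have hβ0 : 0 ≤ β := Finset.sum_nonneg fun i _ =>
    mul_nonneg (hb0 i) (newton_nonneg hQmem i)
  obtain ⟨lam, mu, hlam, hmu, hbal, hAne⟩ :
      ∃ lam mu : ℝ, 0 ≤ lam ∧ 0 ≤ mu ∧ lam * α = mu * β ∧
        Fin.append (lam • a) (mu • b) ≠ 0 := by
    by_cases hcase : α = 0 ∧ β = 0
    · refine ⟨1, 1, zero_le_one, zero_le_one, by rw [hcase.1, hcase.2], ?_⟩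
      intro hA
      obtain ⟨i, hi⟩ := Function.ne_iff.1 hane
      have := congrFun hA (Fin.castAdd m i)
      rw [Fin.append_left] at this
      simp at this
      exact hi this
    · refine ⟨β, α, hβ0, hα0, by ring, ?_⟩
      rcases eq_or_ne α 0 with hαz | hαz
      · have hβz : β ≠ 0 := fun h => hcase ⟨hαz, h⟩
        have hβpos : 0 < β := lt_of_le_of_ne hβ0 (Ne.symm hβz)
        intro hA
        obtain ⟨i, hi⟩ := Function.ne_iff.1 hane
        have := congrFun hA (Fin.castAdd m i)
        rw [Fin.append_left] at this
        simp only [Pi.smul_apply, smul_eq_mul, Pi.zero_apply] at this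
        exact hi (by
          rcases mul_eq_zero.1 this with h | h
          · exact absurd h hβz
          · exact h)
      · have hαpos : 0 < α := lt_of_le_of_ne hα0 (Ne.symm hαz)
        intro hA
        obtain ⟨j, hj⟩ := Function.ne_iff.1 hbne
        have := congrFun hA (Fin.natAdd n j)
        rw [Fin.append_right] at this
        simp only [Pi.smul_apply, smul_eq_mul, Pi.zero_apply] at this
        exact hj (by
          rcases mul_eq_zero.1 this with h | h
          · exact absurd h hαz
          · exact h)
  set A : Fin (n+m) → ℝ := Fin.append (lam • a) (mu • b) with hA
  have hA0 : ∀ i, 0 ≤ A i := by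
    intro i
    refine Fin.addCases (fun j => ?_) (fun j => ?_) i
    · rw [hA, Fin.append_left]; exact mul_nonneg hlam (ha0 j)
    · rw [hA, Fin.append_right]; exact mul_nonneg hmu (hb0 j)
  set mval : ℝ := lam * α with hmval
  -- bound on newton (F+G)
  have hbound : ∀ w ∈ newton (F + G), mval ≤ ∑ i, A i * w i := by
    intro w hw
    obtain ⟨u, hu, c, hc, rfl⟩ := hw
    have hu' : mval ≤ ∑ i, A i * u i := by
      have hsub : suppSet (F + G) ⊆ {w : Fin (n+m) → ℝ | mval ≤ ∑ i, A i * w i} := by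
        rw [suppSet_sum_eq hf]
        rintro w (hwF | hwG)
        · rw [suppSet_rename_castAdd] at hwF
          obtain ⟨x, hx, rfl⟩ := hwF
          have : ∑ i, A i * Fin.append x (0 : Fin m → ℝ) i
              = lam * ∑ i, a i * x i := by
            rw [hA, dot_append]
            simp [Finset.mul_sum, mul_assoc]
          rw [Set.mem_setOf_eq, this, hmval]
          exact mul_le_mul_of_nonneg_left (haP x (suppSet_subset_newton f hx)) hlam
        · rw [suppSet_rename_natAdd] at hwG
          obtain ⟨y, hy, rfl⟩ := hwG
          have : ∑ i, A i * Fin.append (0 : Fin n → ℝ) y i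
              = mu * ∑ i, b i * y i := by
            rw [hA, dot_append]
            simp [Finset.mul_sum, mul_assoc]
          rw [Set.mem_setOf_eq, this, hbal]
          exact mul_le_mul_of_nonneg_left (hbQ y (suppSet_subset_newton g hy)) hmu
      have := convexHull_min hsub (convex_halfSpace_ge (dot_linear A) mval) hu
      exact this
    have hc' : 0 ≤ ∑ i, A i * c i :=
      Finset.sum_nonneg fun i _ => mul_nonneg (hA0 i) (hc i)
    have : ∑ i, A i * (u + c) i = (∑ i, A i * u i) + ∑ i, A i * c i := by
      simp [mul_add, Finset.sum_add_distrib]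
    rw [this]
    linarith
  -- value at z
  have hzval : ∑ i, A i * z i = mval := by
    rw [hz, hA, dot_append]
    have e1 : ∑ i, (lam • a) i * (t • P) i = t * (lam * α) := by
      rw [hα, Finset.mul_sum, Finset.mul_sum]
      apply Finset.sum_congr rfl
      intros; simp; ring
    have e2 : ∑ i, (mu • b) i * ((1 - t) • Q) i = (1 - t) * (mu * β) := by
      rw [hβ, Finset.mul_sum, Finset.mul_sum]
      apply Finset.sum_congr rfl
      intros; simp; ring
    rw [e1, e2, ← hbal, hmval]
    ring
  -- conclude
  have hznotint : z ∉ interior (newton (F + G)) := by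
    intro hint
    have hA2 : 0 < ∑ i, A i * A i := by
      obtain ⟨i0, hi0⟩ := Function.ne_iff.1 hAne
      exact Finset.sum_pos' (fun i _ => mul_self_nonneg _)
        ⟨i0, Finset.mem_univ _, mul_self_pos.2 hi0⟩
    have hcont : Continuous fun s : ℝ => z - s • A := by fun_prop
    have ht : Filter.Tendsto (fun s : ℝ => z - s • A)
        (nhdsWithin 0 (Set.Ioi 0)) (nhds z) := by
      have h0 := (hcont.tendsto 0).mono_left
        (nhdsWithin_le_nhds (s := Set.Ioi (0:ℝ)))
      simpa using h0
    have hev := ht.eventually (isOpen_interior.eventually_mem hint)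
    obtain ⟨s, hsmem, hspos⟩ := (hev.and eventually_mem_nhdsWithin).exists
    have hble := hbound _ (interior_subset hsmem)
    have hcalc : ∑ i, A i * (z - s • A) i
        = (∑ i, A i * z i) - s * ∑ i, A i * A i := by
      rw [Finset.mul_sum]
      rw [← Finset.sum_sub_distrib]
      apply Finset.sum_congr rfl
      intros; simp; ring
    rw [hcalc, hzval] at hble
    have : 0 < s * ∑ i, A i * A i := mul_pos hspos hA2
    linarith
  rw [(newton_isClosed (F + G)).frontier_eq]
  exact ⟨hzmem, hznotint⟩
end

section
/- Let f ∈ k[x₁,…,xₙ] and g ∈ k[y₁,…,y_m] be polynomials vanishing at the origin. Then σ(f+g) = σ(f) + σ(g), where f+g is viewed as a polynomial in k[x,y]. -/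
open MvPolynomial Pointwise

namespace SigmaAux

open Set

variable {ι k : Type*} [CommSemiring k]

def Tset (h : MvPolynomial ι k) : Set ℝ :=
  {σ : ℝ | 0 < σ ∧ (fun _ : ι => 1 / σ) ∈ newton h}

lemma mem_newton {h : MvPolynomial ι k} {x : ι → ℝ} :
    x ∈ newton h ↔ ∃ c ∈ convexHull ℝ (suppSet h), ∀ i, c i ≤ x i := by
  constructor
  · rintro ⟨c, hc, r, hr, rfl⟩
    exact ⟨c, hc, fun i => le_add_of_nonneg_right (hr i)⟩
  · rintro ⟨c, hc, hle⟩
    exact ⟨c, hc, x - c, fun i => sub_nonneg.2 (hle i), by funext i; simp⟩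

lemma newton_zero : newton (0 : MvPolynomial ι k) = ∅ := by
  simp [newton, suppSet, Set.empty_add]

lemma Tset_zero : Tset (0 : MvPolynomial ι k) = ∅ := by
  ext σ; simp [Tset, newton_zero]

lemma zero_not_mem_support {h : MvPolynomial ι k} (hh : constantCoeff h = 0) :
    (0 : ι →₀ ℕ) ∉ h.support := by
  intro hmem
  refine MvPolynomial.mem_support_iff.1 hmem ?_
  rw [← MvPolynomial.constantCoeff_eq]
  exact hh

lemma one_le_sum_of_mem_hull [Fintype ι] {h : MvPolynomial ι k}
    (hh : constantCoeff h = 0) {c : ι → ℝ} (hc : c ∈ convexHull ℝ (suppSet h)) :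
    1 ≤ ∑ i, c i := by
  have hconv : Convex ℝ {x : ι → ℝ | 1 ≤ ∑ i, x i} := by
    refine convex_halfSpace_ge ⟨fun a b => ?_, fun r a => ?_⟩ 1
    · simp [Finset.sum_add_distrib]
    · simp [Finset.mul_sum]
  have hsub : suppSet h ⊆ {x : ι → ℝ | 1 ≤ ∑ i, x i} := by
    rintro _ ⟨d, hd, rfl⟩
    have hd0 : d ≠ 0 := by
      rintro rfl; exact zero_not_mem_support hh hd
    obtain ⟨i, hi⟩ : ∃ i, d i ≠ 0 := by
      by_contra hcon; push_neg at hcon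
      exact hd0 (Finsupp.ext fun i => hcon i)
    have h1 : (1 : ℝ) ≤ (d i : ℝ) := by exact_mod_cast Nat.one_le_iff_ne_zero.2 hi
    have h2 : (d i : ℝ) ≤ ∑ j, (d j : ℝ) :=
      Finset.single_le_sum (f := fun j => (d j : ℝ)) (fun j _ => by positivity) (Finset.mem_univ i)
    exact le_trans h1 h2
  exact convexHull_min hsub hconv hc

lemma Tset_le_card [Fintype ι] {h : MvPolynomial ι k} (hh : constantCoeff h = 0)
    {σ : ℝ} (hσ : σ ∈ Tset h) : σ ≤ Fintype.card ι := by
  obtain ⟨hσ0, hmem⟩ := hσ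
  obtain ⟨c, hc, hle⟩ := mem_newton.1 hmem
  have h1 : (1 : ℝ) ≤ ∑ i, c i := one_le_sum_of_mem_hull hh hc
  have h2 : ∑ i, c i ≤ (Fintype.card ι : ℝ) * (1 / σ) := by
    calc ∑ i, c i ≤ ∑ _i : ι, (1 / σ) := Finset.sum_le_sum fun i _ => hle i
      _ = (Fintype.card ι : ℝ) * (1 / σ) := by
          simp [Finset.sum_const, nsmul_eq_mul]
  have h3 : (1 : ℝ) ≤ (Fintype.card ι : ℝ) / σ := by
    rw [div_eq_mul_one_div]; linarith
  exact (one_le_div hσ0).1 h3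

lemma Tset_bddAbove [Fintype ι] {h : MvPolynomial ι k} (hh : constantCoeff h = 0) :
    BddAbove (Tset h) :=
  ⟨Fintype.card ι, fun _ hσ => Tset_le_card hh hσ⟩

lemma sSup_Tset_nonneg [Fintype ι] {h : MvPolynomial ι k} (hh : constantCoeff h = 0) :
    0 ≤ sSup (Tset h) := by
  rcases (Tset h).eq_empty_or_nonempty with he | ⟨σ, hσ⟩
  · rw [he, Real.sSup_empty]
  · exact le_trans hσ.1.le (le_csSup (Tset_bddAbove hh) hσ)

lemma Tset_nonempty [Fintype ι] {h : MvPolynomial ι k} (hh : h ≠ 0) :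
    (Tset h).Nonempty := by
  obtain ⟨d, hd⟩ : h.support.Nonempty :=
    Finset.nonempty_iff_ne_empty.2 (fun hc => hh (MvPolynomial.support_eq_empty.1 hc))
  have hc : (fun i => (d i : ℝ)) ∈ convexHull ℝ (suppSet h) :=
    subset_convexHull ℝ _ ⟨d, hd, rfl⟩
  set t : ℝ := 1 + ∑ i, (d i : ℝ) with ht_def
  have hsum : (0:ℝ) ≤ ∑ i, (d i : ℝ) := Finset.sum_nonneg fun i _ => by positivity
  have ht : 0 < t := by rw [ht_def]; linarith
  refine ⟨1 / t, by positivity, mem_newton.2 ⟨_, hc, fun i => ?_⟩⟩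
  rw [one_div_one_div]
  have h2 : (d i : ℝ) ≤ ∑ j, (d j : ℝ) :=
    Finset.single_le_sum (f := fun j => (d j : ℝ)) (fun j _ => by positivity) (Finset.mem_univ i)
  rw [ht_def]; linarith

lemma isClosed_newton [Fintype ι] (h : MvPolynomial ι k) : IsClosed (newton h) := by
  have h1 : IsCompact (convexHull ℝ (suppSet h)) :=
    (h.support.finite_toSet.image _).isCompact_convexHull (𝕜 := ℝ)
  have h2 : IsClosed {x : ι → ℝ | ∀ i, 0 ≤ x i} := by
    have : {x : ι → ℝ | ∀ i, 0 ≤ x i} = ⋂ i, {x : ι → ℝ | 0 ≤ x i} := by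
      ext x; simp
    rw [this]
    exact isClosed_iInter fun i => isClosed_le continuous_const (continuous_apply i)
  exact h2.add_left_of_isCompact h1

lemma csSup_Tset_mem [Fintype ι] {h : MvPolynomial ι k} (hh : constantCoeff h = 0)
    (hne : (Tset h).Nonempty) : sSup (Tset h) ∈ Tset h := by
  have hbdd : BddAbove (Tset h) := Tset_bddAbove hh
  obtain ⟨σ₀, hσ₀⟩ := hne
  have hs0 : 0 < sSup (Tset h) := lt_of_lt_of_le hσ₀.1 (le_csSup hbdd hσ₀)
  refine ⟨hs0, ?_⟩
  have hcl : sSup (Tset h) ∈ closure (Tset h) :=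
    (isLUB_csSup ⟨σ₀, hσ₀⟩ hbdd).mem_closure ⟨σ₀, hσ₀⟩
  have hct : ContinuousAt (fun σ : ℝ => (fun _ : ι => 1 / σ)) (sSup (Tset h)) := by
    apply continuousAt_pi.2
    intro i
    exact continuousAt_const.div continuousAt_id hs0.ne'
  have himg := mem_closure_image hct hcl
  exact (isClosed_newton h).closure_subset
    (closure_mono (by rintro _ ⟨σ, hσ, rfl⟩; exact hσ.2) himg)

lemma sigmaP_eq [Fintype ι] {h : MvPolynomial ι k} (hh : constantCoeff h = 0) :
    sigmaP h = ENNReal.ofReal (sSup (Tset h)) := by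
  have himg : {s : ENNReal | ∃ σ : ℝ, 0 < σ ∧ s = ENNReal.ofReal σ ∧
      (fun _ : ι => 1 / σ) ∈ newton h} = ENNReal.ofReal '' Tset h := by
    ext s
    constructor
    · rintro ⟨σ, h1, h2, h3⟩; exact ⟨σ, ⟨h1, h3⟩, h2.symm⟩
    · rintro ⟨σ, ⟨h1, h3⟩, h2⟩; exact ⟨σ, h1, h2.symm, h3⟩
  rw [sigmaP, himg]
  rcases (Tset h).eq_empty_or_nonempty with he | hne
  · rw [he, Real.sSup_empty]; simp
  · exact (Monotone.map_csSup_of_continuousAt ENNReal.continuous_ofReal.continuousAt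
      (fun a b hab => ENNReal.ofReal_le_ofReal hab) hne (Tset_bddAbove hh)).symm

end SigmaAux

namespace SigmaAux

open Set Function

variable {k : Type*} [CommRing k] {n m : ℕ}

/-- extension by zero on the first block -/
noncomputable def E1 : (Fin n → ℝ) →ₗ[ℝ] (Fin (n + m) → ℝ) :=
  Function.ExtendByZero.linearMap ℝ (Fin.castAdd m)

/-- extension by zero on the second block -/
noncomputable def E2 : (Fin m → ℝ) →ₗ[ℝ] (Fin (n + m) → ℝ) :=
  Function.ExtendByZero.linearMap ℝ (Fin.natAdd n)

lemma castAdd_inj : Function.Injective (Fin.castAdd (n := n) m) :=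
  Fin.castAdd_injective _ _

lemma natAdd_inj : Function.Injective (Fin.natAdd (m := m) n) := fun a b hab =>
  Fin.ext (by have := congrArg Fin.val hab; simpa using this)

lemma castAdd_ne_natAdd (i : Fin n) (j : Fin m) :
    Fin.castAdd m i ≠ Fin.natAdd n j := fun heq => by
  have h1 := congrArg Fin.val heq
  have h2 := i.isLt
  simp only [Fin.coe_castAdd, Fin.coe_natAdd] at h1
  omega

lemma natAdd_not_range (j : Fin m) :
    ¬∃ i : Fin n, Fin.castAdd m i = Fin.natAdd n j := by
  rintro ⟨i, hi⟩; exact castAdd_ne_natAdd i j hi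

lemma castAdd_not_range (i : Fin n) :
    ¬∃ j : Fin m, Fin.natAdd n j = Fin.castAdd m i := by
  rintro ⟨j, hj⟩; exact castAdd_ne_natAdd i j hj.symm

lemma fin_cases' (j : Fin (n + m)) :
    (∃ i, j = Fin.castAdd m i) ∨ (∃ i, j = Fin.natAdd n i) := by
  have hlt := j.isLt
  by_cases hj : (j : ℕ) < n
  · exact Or.inl ⟨⟨j, hj⟩, Fin.ext (by simp)⟩
  · exact Or.inr ⟨⟨(j : ℕ) - n, by omega⟩, Fin.ext (by simp; omega)⟩

lemma E1_castAdd (x : Fin n → ℝ) (i : Fin n) : E1 x (Fin.castAdd m i) = x i := by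
  simp only [E1, Function.ExtendByZero.linearMap_apply]
  exact castAdd_inj.extend_apply _ _ _

lemma E1_natAdd (x : Fin n → ℝ) (j : Fin m) : E1 x (Fin.natAdd n j) = 0 := by
  simp only [E1, Function.ExtendByZero.linearMap_apply]
  rw [Function.extend_apply' _ _ _ (natAdd_not_range j)]
  rfl

lemma E2_natAdd (x : Fin m → ℝ) (j : Fin m) : E2 x (Fin.natAdd n j) = x j := by
  simp only [E2, Function.ExtendByZero.linearMap_apply]
  exact natAdd_inj.extend_apply _ _ _

lemma E2_castAdd (x : Fin m → ℝ) (i : Fin n) : E2 x (Fin.castAdd m i) = 0 := by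
  simp only [E2, Function.ExtendByZero.linearMap_apply]
  rw [Function.extend_apply' _ _ _ (castAdd_not_range i)]
  rfl

lemma coords_mapDomain_castAdd (d : Fin n →₀ ℕ) :
    (fun j => ((Finsupp.mapDomain (Fin.castAdd m) d) j : ℝ)) = E1 (fun i => (d i : ℝ)) := by
  funext j
  rcases fin_cases' j with ⟨i, rfl⟩ | ⟨i, rfl⟩
  · rw [Finsupp.mapDomain_apply castAdd_inj, E1_castAdd]
  · rw [Finsupp.mapDomain_notin_range _ _ (by rintro ⟨i', hi'⟩; exact castAdd_ne_natAdd i' i hi'),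
      E1_natAdd]
    simp

lemma coords_mapDomain_natAdd (d : Fin m →₀ ℕ) :
    (fun j => ((Finsupp.mapDomain (Fin.natAdd n) d) j : ℝ)) = E2 (fun i => (d i : ℝ)) := by
  funext j
  rcases fin_cases' j with ⟨i, rfl⟩ | ⟨i, rfl⟩
  · rw [Finsupp.mapDomain_notin_range _ _ (by rintro ⟨j', hj'⟩; exact castAdd_ne_natAdd i j' hj'.symm),
      E2_castAdd]
    simp
  · rw [Finsupp.mapDomain_apply natAdd_inj, E2_natAdd]

variable (f : MvPolynomial (Fin n) k) (g : MvPolynomial (Fin m) k)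

lemma support_sum_eq (hf : constantCoeff f = 0) (hg : constantCoeff g = 0) :
    (rename (Fin.castAdd m) f + rename (Fin.natAdd n) g).support
      = f.support.image (Finsupp.mapDomain (Fin.castAdd m))
        ∪ g.support.image (Finsupp.mapDomain (Fin.natAdd n)) := by
  classical
  apply Finset.Subset.antisymm
  · refine (MvPolynomial.support_add).trans ?_
    rw [MvPolynomial.support_rename_of_injective castAdd_inj,
      MvPolynomial.support_rename_of_injective natAdd_inj]
  · intro e he
    rw [Finset.mem_union, Finset.mem_image, Finset.mem_image] at he
    rw [MvPolynomial.mem_support_iff, MvPolynomial.coeff_add]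
    rcases he with ⟨d, hd, rfl⟩ | ⟨d, hd, rfl⟩
    · rw [coeff_rename_mapDomain _ castAdd_inj]
      rw [MvPolynomial.coeff_rename_eq_zero (Fin.natAdd n) g _ (fun u hu => by
        exfalso
        have hd0 : d = 0 := by
          ext i
          have h1 : (Finsupp.mapDomain (Fin.natAdd n) u) (Fin.castAdd m i) = 0 :=
            Finsupp.mapDomain_notin_range _ _
              (by rintro ⟨j', hj'⟩; exact castAdd_ne_natAdd i j' hj'.symm)
          have h2 := congrFun (congrArg (fun (v : Fin (n + m) →₀ ℕ) => (v : Fin (n + m) → ℕ)) hu)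
            (Fin.castAdd m i)
          rw [Finsupp.mapDomain_apply castAdd_inj] at h2
          simp only [Finsupp.coe_zero, Pi.zero_apply]
          rw [← h2]
          exact h1
        rw [hd0] at hd
        exact zero_not_mem_support hf hd)]
      rw [add_zero]
      exact MvPolynomial.mem_support_iff.1 hd
    · rw [coeff_rename_mapDomain _ natAdd_inj]
      rw [MvPolynomial.coeff_rename_eq_zero (Fin.castAdd m) f _ (fun u hu => by
        exfalso
        have hd0 : d = 0 := by
          ext j
          have h1 : (Finsupp.mapDomain (Fin.castAdd m) u) (Fin.natAdd n j) = 0 :=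
            Finsupp.mapDomain_notin_range _ _
              (by rintro ⟨i', hi'⟩; exact castAdd_ne_natAdd i' j hi')
          have h2 := congrFun (congrArg (fun (v : Fin (n + m) →₀ ℕ) => (v : Fin (n + m) → ℕ)) hu)
            (Fin.natAdd n j)
          rw [Finsupp.mapDomain_apply natAdd_inj] at h2
          simp only [Finsupp.coe_zero, Pi.zero_apply]
          rw [← h2]
          exact h1
        rw [hd0] at hd
        exact zero_not_mem_support hg hd)]
      rw [zero_add]
      exact MvPolynomial.mem_support_iff.1 hd

lemma suppSet_sum_eq (hf : constantCoeff f = 0) (hg : constantCoeff g = 0) :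
    suppSet (rename (Fin.castAdd m) f + rename (Fin.natAdd n) g)
      = ⇑E1 '' suppSet f ∪ ⇑E2 '' suppSet g := by
  rw [suppSet, support_sum_eq f g hf hg, Finset.coe_union, Set.image_union,
    Finset.coe_image, Finset.coe_image, ← Set.image_comp, ← Set.image_comp]
  congr 1
  · rw [suppSet, ← Set.image_comp]
    exact Set.image_congr fun d _ => coords_mapDomain_castAdd d
  · rw [suppSet, ← Set.image_comp]
    exact Set.image_congr fun d _ => coords_mapDomain_natAdd d


lemma E1_hull_mem (hf : constantCoeff f = 0) (hg : constantCoeff g = 0)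
    {c : Fin n → ℝ} (hc : c ∈ convexHull ℝ (suppSet f)) :
    E1 c ∈ convexHull ℝ (suppSet (rename (Fin.castAdd m) f + rename (Fin.natAdd n) g)) := by
  have h1 : (E1 (n := n) (m := m)) c ∈ ⇑(E1 (n := n) (m := m)) '' convexHull ℝ (suppSet f) :=
    ⟨c, hc, rfl⟩
  rw [E1.image_convexHull] at h1
  refine convexHull_mono ?_ h1
  rw [suppSet_sum_eq f g hf hg]
  exact Set.subset_union_left

lemma E2_hull_mem (hf : constantCoeff f = 0) (hg : constantCoeff g = 0)
    {c : Fin m → ℝ} (hc : c ∈ convexHull ℝ (suppSet g)) :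
    E2 c ∈ convexHull ℝ (suppSet (rename (Fin.castAdd m) f + rename (Fin.natAdd n) g)) := by
  have h1 : (E2 (n := n) (m := m)) c ∈ ⇑(E2 (n := n) (m := m)) '' convexHull ℝ (suppSet g) :=
    ⟨c, hc, rfl⟩
  rw [E2.image_convexHull] at h1
  refine convexHull_mono ?_ h1
  rw [suppSet_sum_eq f g hf hg]
  exact Set.subset_union_right

lemma mem_Tset_sum_left (hf : constantCoeff f = 0) (hg : constantCoeff g = 0)
    {σ : ℝ} (hσ : σ ∈ Tset f) :
    σ ∈ Tset (rename (Fin.castAdd m) f + rename (Fin.natAdd n) g) := by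
  obtain ⟨hσ0, hmem⟩ := hσ
  obtain ⟨c, hc, hle⟩ := mem_newton.1 hmem
  refine ⟨hσ0, mem_newton.2 ⟨E1 c, E1_hull_mem f g hf hg hc, fun j => ?_⟩⟩
  rcases fin_cases' j with ⟨i, rfl⟩ | ⟨i, rfl⟩
  · rw [E1_castAdd]; exact hle i
  · rw [E1_natAdd]; positivity

lemma mem_Tset_sum_right (hf : constantCoeff f = 0) (hg : constantCoeff g = 0)
    {σ : ℝ} (hσ : σ ∈ Tset g) :
    σ ∈ Tset (rename (Fin.castAdd m) f + rename (Fin.natAdd n) g) := by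
  obtain ⟨hσ0, hmem⟩ := hσ
  obtain ⟨c, hc, hle⟩ := mem_newton.1 hmem
  refine ⟨hσ0, mem_newton.2 ⟨E2 c, E2_hull_mem f g hf hg hc, fun j => ?_⟩⟩
  rcases fin_cases' j with ⟨i, rfl⟩ | ⟨i, rfl⟩
  · rw [E2_castAdd]; positivity
  · rw [E2_natAdd]; exact hle i

lemma mem_Tset_sum_add (hf : constantCoeff f = 0) (hg : constantCoeff g = 0)
    {σ₁ σ₂ : ℝ} (h1 : σ₁ ∈ Tset f) (h2 : σ₂ ∈ Tset g) :
    σ₁ + σ₂ ∈ Tset (rename (Fin.castAdd m) f + rename (Fin.natAdd n) g) := by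
  obtain ⟨hσ1, hm1⟩ := h1
  obtain ⟨hσ2, hm2⟩ := h2
  obtain ⟨c, hc, hlec⟩ := mem_newton.1 hm1
  obtain ⟨d, hd, hled⟩ := mem_newton.1 hm2
  have hσ : 0 < σ₁ + σ₂ := by linarith
  set u : ℝ := σ₁ / (σ₁ + σ₂) with hu_def
  have hu0 : 0 ≤ u := by positivity
  have hv0 : 0 ≤ 1 - u := by
    rw [sub_nonneg, hu_def]
    exact div_le_one_of_le₀ (by linarith) hσ.le
  have hp : u • E1 c + (1 - u) • E2 d ∈
      convexHull ℝ (suppSet (rename (Fin.castAdd m) f + rename (Fin.natAdd n) g)) :=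
    convex_convexHull ℝ _ (E1_hull_mem f g hf hg hc) (E2_hull_mem f g hf hg hd)
      hu0 hv0 (by ring)
  refine ⟨hσ, mem_newton.2 ⟨_, hp, fun j => ?_⟩⟩
  have hmu : u * (1 / σ₁) = 1 / (σ₁ + σ₂) := by
    rw [hu_def]; field_simp
  have hmv : (1 - u) * (1 / σ₂) = 1 / (σ₁ + σ₂) := by
    rw [hu_def]; field_simp; ring
  rcases fin_cases' j with ⟨i, rfl⟩ | ⟨i, rfl⟩
  · simp only [Pi.add_apply, Pi.smul_apply, smul_eq_mul, E1_castAdd, E2_castAdd,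
      mul_zero, add_zero]
    have := mul_le_mul_of_nonneg_left (hlec i) hu0
    linarith
  · simp only [Pi.add_apply, Pi.smul_apply, smul_eq_mul, E1_natAdd, E2_natAdd,
      mul_zero, zero_add]
    have := mul_le_mul_of_nonneg_left (hled i) hv0
    linarith

lemma Tset_sum_le (hf : constantCoeff f = 0) (hg : constantCoeff g = 0)
    {σ : ℝ} (hσ : σ ∈ Tset (rename (Fin.castAdd m) f + rename (Fin.natAdd n) g)) :
    σ ≤ sSup (Tset f) + sSup (Tset g) := by
  classical
  obtain ⟨hσ0, hmem⟩ := hσ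
  obtain ⟨c, hc, hle⟩ := mem_newton.1 hmem
  rw [suppSet_sum_eq f g hf hg] at hc
  by_cases hf0 : f = 0
  · subst hf0
    rw [show suppSet (0 : MvPolynomial (Fin n) k) = ∅ by simp [suppSet],
      Set.image_empty, Set.empty_union, ← E2.image_convexHull] at hc
    obtain ⟨b, hb, rfl⟩ := hc
    have hg' : σ ∈ Tset g := ⟨hσ0, mem_newton.2 ⟨b, hb, fun j => by
      have h := hle (Fin.natAdd n j); rwa [E2_natAdd] at h⟩⟩
    have h1 : σ ≤ sSup (Tset g) := le_csSup (Tset_bddAbove hg) hg'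
    have h2 : (0 : ℝ) ≤ sSup (Tset (0 : MvPolynomial (Fin n) k)) :=
      sSup_Tset_nonneg (by simp)
    linarith
  · by_cases hg0 : g = 0
    · subst hg0
      rw [show suppSet (0 : MvPolynomial (Fin m) k) = ∅ by simp [suppSet],
        Set.image_empty, Set.union_empty, ← E1.image_convexHull] at hc
      obtain ⟨a, ha, rfl⟩ := hc
      have hf' : σ ∈ Tset f := ⟨hσ0, mem_newton.2 ⟨a, ha, fun i => by
        have h := hle (Fin.castAdd m i); rwa [E1_castAdd] at h⟩⟩
      have h1 : σ ≤ sSup (Tset f) := le_csSup (Tset_bddAbove hf) hf'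
      have h2 : (0 : ℝ) ≤ sSup (Tset (0 : MvPolynomial (Fin m) k)) :=
        sSup_Tset_nonneg (by simp)
      linarith
    · have hne1 : (⇑(E1 (n := n) (m := m)) '' suppSet f).Nonempty := by
        refine Set.Nonempty.image _ ?_
        obtain ⟨d, hd⟩ : f.support.Nonempty :=
          Finset.nonempty_iff_ne_empty.2 fun hcon => hf0 (MvPolynomial.support_eq_empty.1 hcon)
        exact ⟨_, d, hd, rfl⟩
      have hne2 : (⇑(E2 (n := n) (m := m)) '' suppSet g).Nonempty := by
        refine Set.Nonempty.image _ ?_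
        obtain ⟨d, hd⟩ : g.support.Nonempty :=
          Finset.nonempty_iff_ne_empty.2 fun hcon => hg0 (MvPolynomial.support_eq_empty.1 hcon)
        exact ⟨_, d, hd, rfl⟩
      rw [convexHull_union hne1 hne2, ← E1.image_convexHull, ← E2.image_convexHull,
        mem_convexJoin] at hc
      obtain ⟨a', ⟨a, ha, rfl⟩, b', ⟨b, hb, rfl⟩, hseg⟩ := hc
      obtain ⟨u, v, hu0, hv0, huv, rfl⟩ := hseg
      have hA : ∀ i, u * a i ≤ 1 / σ := fun i => by
        have h := hle (Fin.castAdd m i)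
        simp only [Pi.add_apply, Pi.smul_apply, smul_eq_mul, E1_castAdd, E2_castAdd,
          mul_zero, add_zero] at h
        exact h
      have hB : ∀ j, v * b j ≤ 1 / σ := fun j => by
        have h := hle (Fin.natAdd n j)
        simp only [Pi.add_apply, Pi.smul_apply, smul_eq_mul, E1_natAdd, E2_natAdd,
          mul_zero, zero_add] at h
        exact h
      have hss : (1 / σ) * σ = 1 := by field_simp
      have key1 : u * σ ≤ sSup (Tset f) := by
        rcases eq_or_lt_of_le hu0 with h0 | hpos
        · rw [← h0, zero_mul]; exact sSup_Tset_nonneg hf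
        · refine le_csSup (Tset_bddAbove hf)
            ⟨mul_pos hpos hσ0, mem_newton.2 ⟨a, ha, fun i => ?_⟩⟩
          rw [le_div_iff₀ (mul_pos hpos hσ0)]
          have h3 := mul_le_mul_of_nonneg_right (hA i) hσ0.le
          nlinarith
      have key2 : v * σ ≤ sSup (Tset g) := by
        rcases eq_or_lt_of_le hv0 with h0 | hpos
        · rw [← h0, zero_mul]; exact sSup_Tset_nonneg hg
        · refine le_csSup (Tset_bddAbove hg)
            ⟨mul_pos hpos hσ0, mem_newton.2 ⟨b, hb, fun j => ?_⟩⟩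
          rw [le_div_iff₀ (mul_pos hpos hσ0)]
          have h3 := mul_le_mul_of_nonneg_right (hB j) hσ0.le
          nlinarith
      have hsum : u * σ + v * σ = σ := by
        have : u * σ + v * σ = (u + v) * σ := by ring
        rw [this, huv, one_mul]
      linarith

end SigmaAux

theorem stmt2 {k : Type*} [CommRing k] {n m : ℕ}
    (f : MvPolynomial (Fin n) k) (g : MvPolynomial (Fin m) k)
    (hf : constantCoeff f = 0) (hg : constantCoeff g = 0) :
    sigmaP (rename (Fin.castAdd m) f + rename (Fin.natAdd n) g) = sigmaP f + sigmaP g := by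
  classical
  open SigmaAux in
  have hcF : constantCoeff (rename (Fin.castAdd m) f + rename (Fin.natAdd n) g) = 0 := by
    rw [map_add, MvPolynomial.constantCoeff_rename, MvPolynomial.constantCoeff_rename,
      hf, hg, add_zero]
  rw [SigmaAux.sigmaP_eq hf, SigmaAux.sigmaP_eq hg, SigmaAux.sigmaP_eq hcF,
    ← ENNReal.ofReal_add (SigmaAux.sSup_Tset_nonneg hf) (SigmaAux.sSup_Tset_nonneg hg)]
  congr 1
  apply le_antisymm
  · rcases (SigmaAux.Tset (rename (Fin.castAdd m) f + rename (Fin.natAdd n) g)).eq_empty_or_nonempty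
      with he | hne
    · rw [he, Real.sSup_empty]
      exact add_nonneg (SigmaAux.sSup_Tset_nonneg hf) (SigmaAux.sSup_Tset_nonneg hg)
    · exact csSup_le hne fun σ hσ => SigmaAux.Tset_sum_le f g hf hg hσ
  · by_cases hf0 : f = 0
    · by_cases hg0 : g = 0
      · subst hf0; subst hg0
        rw [SigmaAux.Tset_zero, SigmaAux.Tset_zero, Real.sSup_empty, add_zero]
        exact SigmaAux.sSup_Tset_nonneg hcF
      · subst hf0
        have h2 : sSup (SigmaAux.Tset g) ∈ SigmaAux.Tset g :=
          SigmaAux.csSup_Tset_mem hg (SigmaAux.Tset_nonempty hg0)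
        rw [SigmaAux.Tset_zero, Real.sSup_empty, zero_add]
        exact le_csSup (SigmaAux.Tset_bddAbove hcF)
          (SigmaAux.mem_Tset_sum_right 0 g hf hg h2)
    · by_cases hg0 : g = 0
      · subst hg0
        have h1 : sSup (SigmaAux.Tset f) ∈ SigmaAux.Tset f :=
          SigmaAux.csSup_Tset_mem hf (SigmaAux.Tset_nonempty hf0)
        rw [SigmaAux.Tset_zero, Real.sSup_empty, add_zero]
        exact le_csSup (SigmaAux.Tset_bddAbove hcF)
          (SigmaAux.mem_Tset_sum_left f 0 hf hg h1)
      · have h1 : sSup (SigmaAux.Tset f) ∈ SigmaAux.Tset f :=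
          SigmaAux.csSup_Tset_mem hf (SigmaAux.Tset_nonempty hf0)
        have h2 : sSup (SigmaAux.Tset g) ∈ SigmaAux.Tset g :=
          SigmaAux.csSup_Tset_mem hg (SigmaAux.Tset_nonempty hg0)
        exact le_csSup (SigmaAux.Tset_bddAbove hcF)
          (SigmaAux.mem_Tset_sum_add f g hf hg h1 h2)
end

section
/- Let f ∈ k[x₁,…,xₙ] with n ≥ 2 be a polynomial vanishing at the origin. Then σ(f) ≥ σ(f'), where f' = f(x₁,…,x_{n−1},x_{n−1}) ∈ k[x₁,…,x_{n−1}] is obtained by identifying the last two variables. -/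
open MvPolynomial Pointwise

open Finset in
theorem newton_comp_mem {ι κ : Type*} [Fintype ι] [DecidableEq κ] {k : Type*}
    [CommSemiring k] (r : ι → κ) (f : MvPolynomial ι k) {v : κ → ℝ}
    (hv : v ∈ newton (rename r f)) : (fun i => v (r i)) ∈ newton f := by
  classical
  set L : (ι → ℝ) → (κ → ℝ) := fun x j => ∑ i ∈ univ.filter (fun i => r i = j), x i with hLdef
  have hL : IsLinearMap ℝ L := by
    constructor
    · intro x y; funext j; exact Finset.sum_add_distrib
    · intro c x; funext j
      simp only [hLdef, Pi.smul_apply, smul_eq_mul, Finset.mul_sum]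
  rcases Set.mem_add.mp hv with ⟨p, hp, s, hs, hps⟩
  have hsub : suppSet (rename r f) ⊆ L '' suppSet f := by
    rintro y ⟨e, he, rfl⟩
    have he' : coeff e (rename r f) ≠ 0 := by
      simpa [MvPolynomial.mem_support_iff] using he
    obtain ⟨d, hd, hd0⟩ := coeff_rename_ne_zero r f e he'
    refine ⟨fun i => (d i : ℝ), ⟨d, by simpa [MvPolynomial.mem_support_iff], rfl⟩, ?_⟩
    subst hd
    funext j
    have hm : (Finsupp.mapDomain r d) j = ∑ i, if r i = j then d i else 0 := by
      rw [Finsupp.mapDomain, Finsupp.sum_apply, Finsupp.sum]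
      simp only [Finsupp.single_apply]
      exact Finset.sum_subset (Finset.subset_univ _)
        (fun i _ hi => by simp [Finsupp.notMem_support_iff.mp hi])
    simp only [hLdef, hm]
    push_cast
    rw [Finset.sum_filter]
  have hp' : p ∈ L '' convexHull ℝ (suppSet f) := by
    rw [hL.image_convexHull]
    exact convexHull_mono hsub hp
  obtain ⟨q, hq, rfl⟩ := hp'
  have hqnn : ∀ i, 0 ≤ q i := by
    have horth : convexHull ℝ (suppSet f) ⊆ {x : ι → ℝ | ∀ i, 0 ≤ x i} := by
      apply convexHull_min
      · rintro x ⟨d, _, rfl⟩ i; positivity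
      · intro x hx y hy a b ha hb _ i
        have := hx i; have := hy i
        simp only [Pi.add_apply, Pi.smul_apply, smul_eq_mul]
        positivity
    exact horth hq
  refine Set.mem_add.mpr ⟨q, hq, (fun i => v (r i)) - q, ?_, by funext i; simp⟩
  intro i
  have hv' : v (r i) = L q (r i) + s (r i) := by
    rw [← hps]; rfl
  have hle : q i ≤ L q (r i) := by
    refine Finset.single_le_sum (fun j _ => hqnn j) ?_
    simp
  have := hs (r i)
  simp only [Pi.sub_apply]
  linarith [hv']

theorem stmt4 {k : Type*} [CommRing k] {n : ℕ}
    (f : MvPolynomial (Fin (n + 2)) k) (hf : constantCoeff f = 0) :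
    sigmaP (rename (fun i : Fin (n + 2) => (⟨min i.1 n, by omega⟩ : Fin (n + 1))) f)
      ≤ sigmaP f := by
  apply sSup_le_sSup
  rintro s ⟨σ, hσ, rfl, hmem⟩
  exact ⟨σ, hσ, rfl, newton_comp_mem
    (fun i : Fin (n + 2) => (⟨min i.1 n, by omega⟩ : Fin (n + 1))) f hmem⟩
end

section
/- Keep the setting f = h + g₁x₁ + … + g_s x_s with g₁,…,g_s ∈ k[z] nonzero and h ∈ k[y,z]. For I ⊆ {1,…,s} set f_I = h + Σ_{i∈I} g_i x_i. Then σ(f) ≤ σ(f_I) + s − #I; in particular σ(f) ≤ σ(h) + s. -/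
open MvPolynomial Pointwise

section Helpers

variable {ι k : Type*} [CommSemiring k]

/-- The embedding of exponent vectors into `ι → ℝ`. -/
noncomputable def embR (d : ι →₀ ℕ) : ι → ℝ := fun i => (d i : ℝ)

lemma embR_injective : Function.Injective (embR (ι := ι)) := by
  intro a b hab
  ext i
  have := congrFun hab i
  simp only [embR] at this
  exact_mod_cast this

lemma mem_newton_of_weights (f : MvPolynomial ι k) (c : ι → ℝ)
    (w : (ι →₀ ℕ) → ℝ) (hw0 : ∀ d, 0 ≤ w d) (hw1 : ∑ d ∈ f.support, w d = 1)
    (hwc : ∀ i, (∑ d ∈ f.support, w d * (d i : ℝ)) ≤ c i) : c ∈ newton f := by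
  classical
  set v : ι → ℝ := ∑ d ∈ f.support, w d • embR d with hv
  have hvhull : v ∈ convexHull ℝ (suppSet f) := by
    rw [hv, ← Finset.centerMass_eq_of_sum_1 _ _ hw1]
    exact Finset.centerMass_mem_convexHull _ (fun d _ => hw0 d)
      (by rw [hw1]; exact one_pos) (fun d hd => ⟨d, by exact_mod_cast hd, rfl⟩)
  have hvi : ∀ i, v i = ∑ d ∈ f.support, w d * (d i : ℝ) := by
    intro i
    rw [hv]
    simp [Finset.sum_apply, embR]
  rw [newton, Set.mem_add]
  refine ⟨v, hvhull, c - v, fun i => ?_, by abel⟩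
  simp only [Pi.sub_apply, sub_nonneg]
  rw [hvi i]; exact hwc i

lemma exists_weights_of_mem_newton (f : MvPolynomial ι k) (c : ι → ℝ)
    (hc : c ∈ newton f) :
    ∃ w : (ι →₀ ℕ) → ℝ, (∀ d, 0 ≤ w d) ∧ (∑ d ∈ f.support, w d = 1) ∧
      ∀ i, (∑ d ∈ f.support, w d * (d i : ℝ)) ≤ c i := by
  classical
  rw [newton, Set.mem_add] at hc
  obtain ⟨v, hv, p, hp, hvp⟩ := hc
  have hsupp : suppSet f = ↑(f.support.image embR) := by
    simp [suppSet, Finset.coe_image, embR]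
    rfl
  rw [hsupp, Finset.mem_convexHull'] at hv
  obtain ⟨W, hW0, hW1, hWv⟩ := hv
  have hinj : ∀ x ∈ f.support, ∀ y ∈ f.support, embR x = embR y → x = y :=
    fun x _ y _ hxy => embR_injective hxy
  refine ⟨fun d => if d ∈ f.support then W (embR d) else 0, ?_, ?_, ?_⟩
  · intro d
    by_cases hd : d ∈ f.support
    · simp only [hd, if_true]
      exact hW0 _ (Finset.mem_image_of_mem _ hd)
    · simp [hd]
  · rw [← hW1, Finset.sum_image hinj]
    exact Finset.sum_congr rfl fun d hd => by simp [hd]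
  · intro i
    have hvi : v i = ∑ d ∈ f.support, W (embR d) * (d i : ℝ) := by
      rw [← hWv, Finset.sum_image hinj]
      simp [Finset.sum_apply, embR]
    have hle : v i ≤ c i := by
      have := hp i
      rw [← hvp]
      simpa using by linarith [hp i]
    calc (∑ d ∈ f.support, (if d ∈ f.support then W (embR d) else 0) * (d i : ℝ))
        = ∑ d ∈ f.support, W (embR d) * (d i : ℝ) :=
          Finset.sum_congr rfl fun d hd => by simp [hd]
      _ = v i := hvi.symm
      _ ≤ c i := hle

lemma le_sigmaP {f : MvPolynomial ι k} {σ : ℝ} (hσ : 0 < σ)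
    (hmem : (fun _ : ι => 1 / σ) ∈ newton f) : ENNReal.ofReal σ ≤ sigmaP f :=
  le_sSup ⟨σ, hσ, rfl, hmem⟩

lemma sigmaP_le {f : MvPolynomial ι k} {X : ENNReal}
    (H : ∀ σ : ℝ, 0 < σ → (fun _ : ι => 1 / σ) ∈ newton f → ENNReal.ofReal σ ≤ X) :
    sigmaP f ≤ X := by
  refine sSup_le ?_
  rintro x ⟨σ, hσ, rfl, hmem⟩
  exact H σ hσ hmem

lemma sigmaP_rename_le {α β : Type*} (e : α → β) (he : Function.Injective e)
    (p : MvPolynomial α k) : sigmaP (rename e p) ≤ sigmaP p := by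
  classical
  refine sigmaP_le fun σ hσ hmem => le_sigmaP hσ ?_
  obtain ⟨w, hw0, hw1, hwc⟩ := exists_weights_of_mem_newton _ _ hmem
  rw [support_rename_of_injective he] at hw1 hwc
  have hinj : ∀ x ∈ p.support, ∀ y ∈ p.support, Finsupp.mapDomain e x = Finsupp.mapDomain e y → x = y :=
    fun x _ y _ hxy => Finsupp.mapDomain_injective he hxy
  refine mem_newton_of_weights _ _ (fun d => w (Finsupp.mapDomain e d)) (fun d => hw0 _) ?_ ?_
  · rw [← hw1, Finset.sum_image hinj]
  · intro j
    have := hwc (e j)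
    rw [Finset.sum_image hinj] at this
    simpa [Finsupp.mapDomain_apply he] using this

end Helpers

section Key

variable {k : Type*} [CommRing k] {s t r : ℕ}

lemma key_ineq (g : Fin s → MvPolynomial (Fin r) k)
    (h : MvPolynomial (Fin t ⊕ Fin r) k)
    (f : MvPolynomial (Fin s ⊕ Fin t ⊕ Fin r) k)
    (hf : f = rename Sum.inr h +
      ∑ i : Fin s, rename (Sum.inr ∘ Sum.inr) (g i) * X (Sum.inl i))
    (I : Finset (Fin s)) :
    sigmaP f ≤ sigmaP (rename Sum.inr h +
        ∑ i ∈ I, rename (Sum.inr ∘ Sum.inr) (g i) * X (Sum.inl i))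
      + ((s - I.card : ℕ) : ENNReal) := by
  classical
  set G : Fin s → MvPolynomial (Fin s ⊕ Fin t ⊕ Fin r) k :=
    fun i => rename (Sum.inr ∘ Sum.inr) (g i) * X (Sum.inl i) with hG
  set fI : MvPolynomial (Fin s ⊕ Fin t ⊕ Fin r) k :=
    rename Sum.inr h + ∑ i ∈ I, G i with hfI
  set m : ℕ := s - I.card with hm
  have hcardc : Iᶜ.card = m := by
    rw [Finset.card_compl, Fintype.card_fin]
  -- decomposition f = fI + ∑_{i ∉ I} G i
  have hdec : f = fI + ∑ i ∈ Iᶜ, G i := by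
    rw [hf, hfI, add_assoc, Finset.sum_add_sum_compl]
  -- coefficient agreement on x_{i∉I}-free monomials
  have hcoeff : ∀ d : (Fin s ⊕ Fin t ⊕ Fin r) →₀ ℕ,
      (∀ i ∉ I, d (Sum.inl i) = 0) → coeff d f = coeff d fI := by
    intro d hd
    rw [hdec, coeff_add, coeff_sum]
    have : ∀ i ∈ Iᶜ, coeff d (G i) = 0 := by
      intro i hi
      rw [hG]
      simp only
      rw [coeff_mul_X']
      have : Sum.inl i ∉ d.support := by
        simp [Finsupp.mem_support_iff, hd i (Finset.mem_compl.mp hi)]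
      simp [this]
    rw [Finset.sum_congr rfl this]
    simp
  refine sigmaP_le fun σ hσ hmem => ?_
  by_cases hcase : σ ≤ (m : ℝ)
  · calc ENNReal.ofReal σ ≤ (m : ENNReal) := by
          rw [← ENNReal.ofReal_natCast m]
          exact ENNReal.ofReal_le_ofReal hcase
      _ ≤ sigmaP fI + (m : ENNReal) := le_add_self
  · push_neg at hcase
    obtain ⟨w, hw0, hw1, hwc⟩ := exists_weights_of_mem_newton _ _ hmem
    set S := f.support with hS
    set T := S.filter (fun d => ∀ i ∉ I, d (Sum.inl i) = 0) with hT
    have hTsub : T ⊆ fI.support := by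
      intro d hd
      rw [hT, Finset.mem_filter] at hd
      rw [mem_support_iff, ← hcoeff d hd.2]
      exact mem_support_iff.mp hd.1
    set μ := ∑ d ∈ T, w d with hμdef
    have hc : (0:ℝ) < 1 / σ := by positivity
    -- mass bound : 1 ≤ μ + m * (1/σ)
    have hmass : 1 ≤ μ + (m : ℝ) * (1 / σ) := by
      have hsplit : (1:ℝ) = μ + ∑ d ∈ S.filter (fun d => ¬ ∀ i ∉ I, d (Sum.inl i) = 0), w d := by
        rw [hμdef, hT, Finset.sum_filter_add_sum_filter_not S _ w, hw1]
      have hstep1 : ∑ d ∈ S.filter (fun d => ¬ ∀ i ∉ I, d (Sum.inl i) = 0), w d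
          ≤ ∑ i ∈ Iᶜ, ∑ d ∈ S, w d * ((d (Sum.inl i) : ℝ)) := by
        calc ∑ d ∈ S.filter (fun d => ¬ ∀ i ∉ I, d (Sum.inl i) = 0), w d
            ≤ ∑ d ∈ S.filter (fun d => ¬ ∀ i ∉ I, d (Sum.inl i) = 0),
                ∑ i ∈ Iᶜ, w d * ((d (Sum.inl i) : ℝ)) := by
              refine Finset.sum_le_sum fun d hd => ?_
              rw [Finset.mem_filter] at hd
              push_neg at hd
              obtain ⟨i, hiI, hdi⟩ := hd.2
              rw [← Finset.mul_sum]
              have h1 : (1:ℝ) ≤ ∑ i ∈ Iᶜ, ((d (Sum.inl i) : ℝ)) := by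
                have : (1:ℝ) ≤ (d (Sum.inl i) : ℝ) := by
                  exact_mod_cast Nat.one_le_iff_ne_zero.mpr hdi
                refine le_trans this ?_
                exact Finset.single_le_sum (f := fun j => ((d (Sum.inl j) : ℝ)))
                  (fun j _ => Nat.cast_nonneg _) (Finset.mem_compl.mpr hiI)
              nlinarith [hw0 d]
          _ = ∑ i ∈ Iᶜ, ∑ d ∈ S.filter (fun d => ¬ ∀ i ∉ I, d (Sum.inl i) = 0),
                w d * ((d (Sum.inl i) : ℝ)) := Finset.sum_comm
          _ ≤ ∑ i ∈ Iᶜ, ∑ d ∈ S, w d * ((d (Sum.inl i) : ℝ)) := by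
              refine Finset.sum_le_sum fun i _ => ?_
              exact Finset.sum_le_sum_of_subset_of_nonneg (Finset.filter_subset _ _)
                (fun d _ _ => mul_nonneg (hw0 d) (Nat.cast_nonneg _))
      have hstep2 : ∑ i ∈ Iᶜ, ∑ d ∈ S, w d * ((d (Sum.inl i) : ℝ)) ≤ (m:ℝ) * (1/σ) := by
        calc ∑ i ∈ Iᶜ, ∑ d ∈ S, w d * ((d (Sum.inl i) : ℝ))
            ≤ ∑ _i ∈ Iᶜ, (1/σ : ℝ) := Finset.sum_le_sum fun i _ => hwc (Sum.inl i)
          _ = (m:ℝ) * (1/σ) := by rw [Finset.sum_const, hcardc, nsmul_eq_mul]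
      linarith
    have hσ' : (0:ℝ) < σ - m := by linarith
    have hμpos : (0:ℝ) < μ := by
      have : (m:ℝ) * (1/σ) < 1 := by
        rw [mul_one_div, div_lt_one hσ]
        exact hcase
      linarith
    -- membership for fI at σ' = σ - m
    have hmemI : (fun _ : Fin s ⊕ Fin t ⊕ Fin r => 1 / (σ - m)) ∈ newton fI := by
      refine mem_newton_of_weights _ _ (fun d => if d ∈ T then w d / μ else 0) ?_ ?_ ?_
      · intro d
        by_cases hd : d ∈ T
        · simp only [hd, if_true]
          exact div_nonneg (hw0 d) hμpos.le
        · simp [hd]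
      · have hsum : ∑ d ∈ fI.support, (if d ∈ T then w d / μ else 0)
            = ∑ d ∈ T, w d / μ := by
          rw [Finset.sum_ite_mem, Finset.inter_eq_right.mpr hTsub]
        rw [hsum, ← Finset.sum_div, ← hμdef, div_self hμpos.ne']
      · intro i
        have hTsum : ∑ d ∈ fI.support, (if d ∈ T then w d / μ else 0) * ((d i : ℝ))
            = ∑ d ∈ T, w d / μ * ((d i : ℝ)) := by
          simp only [ite_mul, zero_mul]
          rw [Finset.sum_ite_mem, Finset.inter_eq_right.mpr hTsub]
        have heq : ∑ d ∈ T, w d / μ * ((d i : ℝ))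
            = (∑ d ∈ T, w d * ((d i : ℝ))) / μ := by
          rw [Finset.sum_div]
          exact Finset.sum_congr rfl fun d _ => by ring
        have hsum : ∑ d ∈ T, w d * ((d i : ℝ)) ≤ 1/σ :=
          le_trans (Finset.sum_le_sum_of_subset_of_nonneg (Finset.filter_subset _ _)
            (fun d _ _ => mul_nonneg (hw0 d) (Nat.cast_nonneg _))) (hwc i)
        have hsnn : 0 ≤ ∑ d ∈ T, w d * ((d i : ℝ)) :=
          Finset.sum_nonneg fun d _ => mul_nonneg (hw0 d) (Nat.cast_nonneg _)
        have hμlb : (σ - m)/σ ≤ μ := by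
          have h2 : (σ - m)/σ = 1 - m * (1/σ) := by field_simp
          linarith
        show ∑ d ∈ fI.support, (if d ∈ T then w d / μ else 0) * ((d i : ℝ))
            ≤ 1 / (σ - (m:ℝ))
        rw [hTsum, heq, div_le_div_iff₀ hμpos hσ']
        have hσσ : (0:ℝ) < 1/σ := hc
        calc (∑ d ∈ T, w d * ((d i : ℝ))) * (σ - (m:ℝ))
            ≤ (1/σ) * (σ - (m:ℝ)) := by nlinarith
          _ = (σ - (m:ℝ))/σ := by ring
          _ ≤ μ := hμlb
          _ = 1 * μ := (one_mul μ).symm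
    have hI : ENNReal.ofReal (σ - m) ≤ sigmaP fI := le_sigmaP hσ' hmemI
    calc ENNReal.ofReal σ = ENNReal.ofReal ((σ - m) + m) := by ring_nf
      _ = ENNReal.ofReal (σ - m) + ENNReal.ofReal (m:ℝ) :=
          ENNReal.ofReal_add hσ'.le (Nat.cast_nonneg _)
      _ ≤ sigmaP fI + (m : ENNReal) := by
          rw [ENNReal.ofReal_natCast]
          exact add_le_add_left hI _

end Key

theorem stmt12 {k : Type*} [CommRing k] {s t r : ℕ}
    (g : Fin s → MvPolynomial (Fin r) k) (hg : ∀ i, g i ≠ 0)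
    (h : MvPolynomial (Fin t ⊕ Fin r) k) (hh : constantCoeff h = 0)
    (f : MvPolynomial (Fin s ⊕ Fin t ⊕ Fin r) k)
    (hf : f = rename Sum.inr h +
      ∑ i : Fin s, rename (Sum.inr ∘ Sum.inr) (g i) * X (Sum.inl i))
    (I : Finset (Fin s)) :
    sigmaP f ≤ sigmaP (rename Sum.inr h +
        ∑ i ∈ I, rename (Sum.inr ∘ Sum.inr) (g i) * X (Sum.inl i))
      + ((s - I.card : ℕ) : ENNReal) ∧
    sigmaP f ≤ sigmaP h + (s : ENNReal) := by
  constructor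
  · exact key_ineq g h f hf I
  · have h1 := key_ineq g h f hf ∅
    simp only [Finset.sum_empty, add_zero, Finset.card_empty, Nat.sub_zero] at h1
    refine le_trans h1 (add_le_add_left ?_ _)
    exact sigmaP_rename_le Sum.inr Sum.inr_injective h
end

section
/- Let x₁,…,xₗ, z_{1},…,z_d be variables and g₁,…,gₗ ∈ k[z₁,…,z_d] nonzero. Suppose F = x₁g₁ + … + xₗgₗ is non-degenerate with respect to the faces of its Newton polyhedron at the origin (no critical point of any truncation on the torus). If (a₁,…,a_d) ∈ (k̄*)^d is a common zero of g₁,…,gₗ, then the ℓ×d Jacobian matrix (∂g_i/∂z_j(a)) has rank ℓ. -/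
open MvPolynomial Pointwise

section Aux

variable {l d : ℕ} {R : Type*} [CommSemiring R]

/-- The exponent vector of `x_i * z^m`. -/
noncomputable def expE (l d : ℕ) (i : Fin l) (m : Fin d →₀ ℕ) : (Fin l ⊕ Fin d) →₀ ℕ :=
  Finsupp.single (Sum.inl i) 1 + m.mapDomain Sum.inr

lemma expE_inl (i i' : Fin l) (m : Fin d →₀ ℕ) :
    expE l d i m (Sum.inl i') = if i' = i then 1 else 0 := by
  classical
  rw [expE, Finsupp.add_apply,
    Finsupp.mapDomain_notin_range m (Sum.inl i') (by rintro ⟨x, hx⟩; cases hx),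
    add_zero, Finsupp.single_apply]
  simp [eq_comm]

lemma expE_inr (i : Fin l) (m : Fin d →₀ ℕ) (j : Fin d) :
    expE l d i m (Sum.inr j) = m j := by
  classical
  simp [expE, Finsupp.mapDomain_apply Sum.inr_injective]

lemma coeff_expE (c : Fin l → MvPolynomial (Fin d) R) (i : Fin l) (m : Fin d →₀ ℕ) :
    MvPolynomial.coeff (expE l d i m)
      (∑ i' : Fin l, MvPolynomial.X (Sum.inl i') * MvPolynomial.rename Sum.inr (c i'))
      = MvPolynomial.coeff m (c i) := by
  classical
  rw [MvPolynomial.coeff_sum]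
  rw [Finset.sum_eq_single i]
  · rw [expE, MvPolynomial.coeff_X_mul,
      MvPolynomial.coeff_rename_mapDomain Sum.inr Sum.inr_injective]
  · intro i' _ hne
    rw [MvPolynomial.coeff_X_mul', if_neg (by
      simp only [Finsupp.mem_support_iff, ne_eq, not_not]
      rw [expE_inl]
      exact if_neg hne)]
  · simp

lemma coeff_ne_zero_expE (c : Fin l → MvPolynomial (Fin d) R) (D : (Fin l ⊕ Fin d) →₀ ℕ)
    (h : MvPolynomial.coeff D
      (∑ i' : Fin l, MvPolynomial.X (Sum.inl i') * MvPolynomial.rename Sum.inr (c i')) ≠ 0) :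
    ∃ i m, D = expE l d i m ∧ MvPolynomial.coeff m (c i) ≠ 0 := by
  classical
  rw [MvPolynomial.coeff_sum] at h
  obtain ⟨i, -, hi⟩ := Finset.exists_ne_zero_of_sum_ne_zero h
  rw [MvPolynomial.coeff_X_mul'] at hi
  split_ifs at hi with hmem
  · obtain ⟨m, hm, hcm⟩ := MvPolynomial.coeff_rename_ne_zero _ _ _ hi
    refine ⟨i, m, ?_, hcm⟩
    have hle : Finsupp.single (Sum.inl i) 1 ≤ D := by
      rw [Finsupp.single_le_iff]
      exact Nat.one_le_iff_ne_zero.mpr (Finsupp.mem_support_iff.mp hmem)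
    rw [expE, hm, add_comm]
    exact (tsub_add_cancel_of_le hle).symm
  · exact absurd rfl hi

lemma pderiv_rename_inr_inl (i₀ : Fin l) (p : MvPolynomial (Fin d) R) :
    MvPolynomial.pderiv (Sum.inl i₀ : Fin l ⊕ Fin d) (MvPolynomial.rename Sum.inr p) = 0 := by
  apply MvPolynomial.pderiv_eq_zero_of_notMem_vars
  intro h
  obtain ⟨j, -, hj⟩ := MvPolynomial.mem_vars_rename _ _ h
  cases hj

lemma pderiv_inl_sum (c : Fin l → MvPolynomial (Fin d) R) (i₀ : Fin l) :
    MvPolynomial.pderiv (Sum.inl i₀)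
      (∑ i : Fin l, MvPolynomial.X (Sum.inl i) * MvPolynomial.rename Sum.inr (c i))
      = MvPolynomial.rename Sum.inr (c i₀) := by
  classical
  rw [map_sum]
  rw [Finset.sum_eq_single i₀]
  · rw [MvPolynomial.pderiv_mul, pderiv_rename_inr_inl, MvPolynomial.pderiv_X_self]
    simp
  · intro i _ hne
    rw [MvPolynomial.pderiv_mul, pderiv_rename_inr_inl,
      MvPolynomial.pderiv_X_of_ne (by simp [hne])]
    simp
  · simp

lemma pderiv_inr_sum (c : Fin l → MvPolynomial (Fin d) R) (j : Fin d) :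
    MvPolynomial.pderiv (Sum.inr j)
      (∑ i : Fin l, MvPolynomial.X (Sum.inl i) * MvPolynomial.rename Sum.inr (c i))
      = ∑ i : Fin l, MvPolynomial.X (Sum.inl i) *
          MvPolynomial.rename Sum.inr (MvPolynomial.pderiv j (c i)) := by
  classical
  rw [map_sum]
  refine Finset.sum_congr rfl fun i _ => ?_
  rw [MvPolynomial.pderiv_mul, MvPolynomial.pderiv_X_of_ne (by simp),
    MvPolynomial.pderiv_rename Sum.inr_injective]
  simp

open Classical in
lemma coeff_trunc' {ι K : Type*} [CommSemiring K] (f : MvPolynomial ι K) (τ : Set (ι → ℝ))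
    (D : ι →₀ ℕ) :
    MvPolynomial.coeff D (trunc f τ) =
      if D ∈ f.support ∧ ((fun i => (D i : ℝ)) ∈ τ) then MvPolynomial.coeff D f else 0 := by
  rw [trunc, MvPolynomial.coeff_sum]
  have h : ∀ D' ∈ f.support,
      MvPolynomial.coeff D (if (fun i => (D' i : ℝ)) ∈ τ
          then MvPolynomial.monomial D' (f.coeff D') else 0)
        = if D' = D then (if (fun i => (D i : ℝ)) ∈ τ then MvPolynomial.coeff D f else 0)
          else 0 := by
    intro D' _
    by_cases hD : D' = D
    · subst hD; split_ifs <;> simp_all [MvPolynomial.coeff_monomial]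
    · split_ifs <;> simp_all [MvPolynomial.coeff_monomial]
  rw [Finset.sum_congr rfl h, Finset.sum_ite_eq' f.support D]
  by_cases h1 : D ∈ f.support <;> by_cases h2 : (fun i => (D i : ℝ)) ∈ τ <;> simp [h1, h2]

end Aux
theorem stmt17 {l d : ℕ} {k : Type*} [Field k]
    (g : Fin l → MvPolynomial (Fin d) k) (hg : ∀ i, g i ≠ 0)
    (F : MvPolynomial (Fin l ⊕ Fin d) k)
    (hF : F = ∑ i : Fin l, X (Sum.inl i) * rename Sum.inr (g i))
    (hnd : isNondeg F)
    (a : Fin d → AlgebraicClosure k) (ha : ∀ j, a j ≠ 0)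
    (hz : ∀ i, eval a (map (algebraMap k (AlgebraicClosure k)) (g i)) = 0) :
    (Matrix.of fun (i : Fin l) (j : Fin d) =>
        eval a (pderiv j (map (algebraMap k (AlgebraicClosure k)) (g i)))).rank = l := by
  classical
  subst hF
  set φ := algebraMap k (AlgebraicClosure k) with hφ
  set Fs : MvPolynomial (Fin l ⊕ Fin d) k :=
    ∑ i : Fin l, X (Sum.inl i) * rename Sum.inr (g i) with hFs
  have key : LinearIndependent (AlgebraicClosure k)
      (fun (i : Fin l) (j : Fin d) => eval a (pderiv j (map φ (g i)))) := by
    rw [Fintype.linearIndependent_iff]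
    intro α hα0
    by_contra hc
    push_neg at hc
    obtain ⟨i₀, hi₀⟩ := hc
    have hα : ∀ j : Fin d, ∑ i, α i * eval a (pderiv j (map φ (g i))) = 0 := by
      intro j
      have := congrFun hα0 j
      simpa [Finset.sum_apply] using this
    -- the weight vector
    set b : Fin l → ℝ := fun i => if α i ≠ 0 then 1 else 2 with hb
    have hb1 : ∀ i, b i = 1 ↔ α i ≠ 0 := by
      intro i; simp only [hb]; split_ifs with h <;> simp [h]
    have hb12 : ∀ i, b i = 1 ∨ b i = 2 := by
      intro i; simp only [hb]; split_ifs <;> simp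
    have hbpos : ∀ i, (0:ℝ) ≤ b i := by
      intro i; rcases hb12 i with h | h <;> rw [h] <;> norm_num
    set w : Fin l ⊕ Fin d → ℝ := Sum.elim b (fun _ => 0) with hw
    have hwnn : ∀ s, 0 ≤ w s := by rintro (i | j) <;> simp [hw, hbpos]
    have hW : ∀ x : Fin l ⊕ Fin d → ℝ,
        ∑ s, w s * x s = ∑ i, b i * x (Sum.inl i) := by
      intro x
      rw [Fintype.sum_sum_type]
      simp [hw]
    have hWE' : ∀ (i : Fin l) (m : Fin d →₀ ℕ),
        ∑ i', b i' * ((expE l d i m (Sum.inl i') : ℕ) : ℝ) = b i := by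
      intro i m
      have h1 : ∀ i' : Fin l, b i' * ((expE l d i m (Sum.inl i') : ℕ) : ℝ)
          = if i' = i then b i' else 0 := by
        intro i'; rw [expE_inl]; split_ifs <;> simp
      rw [Finset.sum_congr rfl fun i' _ => h1 i', Finset.sum_ite_eq' Finset.univ i b]
      simp
    have hWE : ∀ (i : Fin l) (m : Fin d →₀ ℕ),
        ∑ s, w s * ((expE l d i m s : ℕ) : ℝ) = b i := by
      intro i m
      rw [hW (fun s => ((expE l d i m s : ℕ) : ℝ))]
      exact hWE' i m
    -- support characterization
    have hFsupp : ∀ D ∈ Fs.support, ∃ i m, D = expE l d i m ∧ coeff m (g i) ≠ 0 := by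
      intro D hD
      exact coeff_ne_zero_expE g D (MvPolynomial.mem_support_iff.mp hD)
    have hsupp_newton : ∀ D ∈ Fs.support,
        (fun s => ((D s : ℕ) : ℝ)) ∈ newton Fs := by
      intro D hD
      have h1 : (fun s => ((D s : ℕ) : ℝ)) ∈ convexHull ℝ (suppSet Fs) :=
        subset_convexHull ℝ _ ⟨D, hD, rfl⟩
      have h2 : (0 : (Fin l ⊕ Fin d) → ℝ) ∈ {x : (Fin l ⊕ Fin d) → ℝ | ∀ i, 0 ≤ x i} :=
        fun i => le_refl 0
      have := Set.add_mem_add h1 h2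
      simpa [newton] using this
    -- linear functional
    have hlin : IsLinearMap ℝ (fun x : (Fin l ⊕ Fin d) → ℝ => ∑ i, b i * x (Sum.inl i)) := by
      constructor
      · intro x y; simp [mul_add, Finset.sum_add_distrib]
      · intro c x
        simp only [Pi.smul_apply, smul_eq_mul, Finset.mul_sum]
        exact Finset.sum_congr rfl fun i _ => by ring
    have hhull : convexHull ℝ (suppSet Fs) ⊆
        {x : (Fin l ⊕ Fin d) → ℝ | 1 ≤ ∑ i, b i * x (Sum.inl i)} := by
      apply convexHull_min
      · rintro _ ⟨D, hD, rfl⟩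
        obtain ⟨i, m, rfl, hm⟩ := hFsupp D hD
        show 1 ≤ ∑ i', b i' * ((expE l d i m (Sum.inl i') : ℕ) : ℝ)
        rw [hWE' i m]
        rcases hb12 i with h | h <;> simp [h]
      · exact convex_halfSpace_ge hlin 1
    have hlb : ∀ x ∈ newton Fs, 1 ≤ ∑ s, w s * x s := by
      intro x hx
      rw [newton, Set.mem_add] at hx
      obtain ⟨u, hu, v, hv, rfl⟩ := hx
      rw [hW]
      have h1 : 1 ≤ ∑ i, b i * u (Sum.inl i) := hhull hu
      have h2 : 0 ≤ ∑ i, b i * v (Sum.inl i) :=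
        Finset.sum_nonneg fun i _ => mul_nonneg (hbpos i) (hv _)
      have h3 : ∑ i, b i * (u + v) (Sum.inl i)
          = (∑ i, b i * u (Sum.inl i)) + ∑ i, b i * v (Sum.inl i) := by
        simp [mul_add, Finset.sum_add_distrib]
      rw [h3]; linarith
    -- a point attaining value one
    obtain ⟨m₀, hm₀⟩ := MvPolynomial.support_nonempty.mpr (hg i₀)
    have hpt_supp : expE l d i₀ m₀ ∈ Fs.support := by
      rw [MvPolynomial.mem_support_iff, coeff_expE]
      exact MvPolynomial.mem_support_iff.mp hm₀
    have hpt : (1:ℝ) ∈ (fun x => ∑ s, w s * x s) '' newton Fs := by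
      refine ⟨fun s => ((expE l d i₀ m₀ s : ℕ) : ℝ), hsupp_newton _ hpt_supp, ?_⟩
      show ∑ s, w s * ((expE l d i₀ m₀ s : ℕ) : ℝ) = 1
      rw [hWE]
      exact (hb1 i₀).mpr hi₀
    -- NV computation
    have hNV : NV Fs w = 1 := by
      apply le_antisymm
      · exact csInf_le ⟨1, by rintro y ⟨x, hx, rfl⟩; exact hlb x hx⟩ hpt
      · exact le_csInf ⟨1, hpt⟩ (by rintro y ⟨x, hx, rfl⟩; exact hlb x hx)
    -- truncation computation
    have htr : trunc Fs (meetLocus Fs w)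
        = ∑ i : Fin l, X (Sum.inl i) * rename Sum.inr (if α i ≠ 0 then g i else 0) := by
      apply MvPolynomial.ext
      intro D
      rw [coeff_trunc']
      by_cases hD : D ∈ Fs.support
      · obtain ⟨i, m, rfl, hm⟩ := hFsupp D hD
        have hmem := hsupp_newton _ hD
        have hcond : ((fun s => ((expE l d i m s : ℕ) : ℝ)) ∈ meetLocus Fs w) ↔ α i ≠ 0 := by
          rw [meetLocus, Set.mem_sep_iff, hNV]
          constructor
          · rintro ⟨-, hsum⟩
            rw [hWE] at hsum
            exact (hb1 i).mp hsum
          · intro hα'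
            exact ⟨hmem, by rw [hWE]; exact (hb1 i).mpr hα'⟩
        rw [coeff_expE (fun i' => if α i' ≠ 0 then g i' else 0) i m]
        by_cases hαi : α i ≠ 0
        · rw [if_pos ⟨hD, hcond.mpr hαi⟩, if_pos hαi, coeff_expE]
        · rw [if_neg (fun hc => hαi (hcond.mp hc.2)), if_neg hαi, MvPolynomial.coeff_zero]
      · rw [if_neg (fun hc => hD hc.1)]
        by_contra hne
        obtain ⟨i, m, rfl, hm⟩ := coeff_ne_zero_expE _ _ (Ne.symm hne)
        have hgm : coeff m (g i) ≠ 0 := by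
          by_cases hαi : α i ≠ 0
          · rwa [if_pos hαi] at hm
          · rw [if_neg hαi] at hm; simp at hm
        exact hD (MvPolynomial.mem_support_iff.mpr (by rw [coeff_expE]; exact hgm))
    -- contradiction with nondegeneracy
    refine hnd w hwnn ⟨Sum.elim (fun i => if α i ≠ 0 then α i else 1) a, ?_, ?_⟩
    · rintro (i | j)
      · dsimp only [Sum.elim_inl]
        split_ifs with h
        · exact h
        · exact one_ne_zero
      · exact ha j
    · intro s
      rw [htr]
      have hmap : map φ (∑ i : Fin l, X (Sum.inl i) *
            rename Sum.inr (if α i ≠ 0 then g i else 0))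
          = ∑ i : Fin l, X (Sum.inl i) *
              rename Sum.inr (map φ (if α i ≠ 0 then g i else 0)) := by
        rw [map_sum (map φ)]
        refine Finset.sum_congr rfl fun i _ => ?_
        rw [map_mul, MvPolynomial.map_X, MvPolynomial.map_rename]
      rw [hmap]
      cases s with
      | inl i₀' =>
        rw [pderiv_inl_sum, MvPolynomial.eval_rename]
        have hc : (Sum.elim (fun i => if α i ≠ 0 then α i else 1) a) ∘ Sum.inr = a := rfl
        rw [hc]
        by_cases hαi : α i₀' ≠ 0
        · rw [if_pos hαi]; exact hz i₀'
        · rw [if_neg hαi]; simp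
      | inr j =>
        rw [pderiv_inr_sum, map_sum (eval _)]
        have hterm : ∀ i : Fin l,
            eval (Sum.elim (fun i => if α i ≠ 0 then α i else 1) a)
              (X (Sum.inl i) * rename Sum.inr (pderiv j (map φ (if α i ≠ 0 then g i else 0))))
            = α i * eval a (pderiv j (map φ (g i))) := by
          intro i
          rw [map_mul, MvPolynomial.eval_X, MvPolynomial.eval_rename]
          have hc : (Sum.elim (fun i => if α i ≠ 0 then α i else 1) a) ∘ Sum.inr = a := rfl
          rw [hc, Sum.elim_inl]
          by_cases hαi : α i ≠ 0
          · rw [if_pos hαi, if_pos hαi]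
          · have h0 : α i = 0 := not_not.mp hαi
            rw [if_neg hαi, if_neg hαi, h0]
            simp
        rw [Finset.sum_congr rfl fun i _ => hterm i]
        exact hα j
  have := key.rank_matrix
  exact this.trans (Fintype.card_fin l)
end
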